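/- Let $c$ be a positive continuous function on $(T,+\infty)$ such that $c(t)e^{-t}$ is decreasing in $t$ and $\int_T^{+\infty} c(t)e^{-t}\,dt < +\infty$. Then for every $t \in (T,+\infty)$, $\left(\int_T^t c(t_1)e^{-t_1}\,dt_1\right)^2 > c(t)e^{-t}\int_T^t\left(\int_T^{t_2} c(t_1)e^{-t_1}\,dt_1\right)dt_2$. -/

import Mathlib

open MeasureTheory Real Set

theorem stmt_0 (T : ℝ) (c : ℝ → ℝ)
    (hc_cont : ContinuousOn c (Ioi T))
    (hc_pos : ∀ t ∈ Ioi T, 0 < c t)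
    (hc_dec : ∀ s ∈ Ioi T, ∀ t ∈ Ioi T, s ≤ t → c t * exp (-t) ≤ c s * exp (-s))
    (hc_int : IntegrableOn (fun t => c t * exp (-t)) (Ioi T)) :
    ∀ t ∈ Ioi T,
      c t * exp (-t) * (∫ t2 in T..t, ∫ t1 in T..t2, c t1 * exp (-t1)) <
        (∫ t1 in T..t, c t1 * exp (-t1)) ^ 2 := by
  intro t ht
  rw [mem_Ioi] at ht
  set f : ℝ → ℝ := fun s => c s * exp (-s) with hf
  set F : ℝ → ℝ := fun s => ∫ u in T..s, f u with hFdef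
  have hfcont : ContinuousOn f (Ioi T) :=
    hc_cont.mul (continuous_exp.comp continuous_neg).continuousOn
  -- interval integrability of f on [T, s] for T ≤ s
  have hfint : ∀ s, T ≤ s → IntervalIntegrable f volume T s := by
    intro s hs
    rw [intervalIntegrable_iff_integrableOn_Ioc_of_le hs]
    exact hc_int.mono_set Ioc_subset_Ioi_self
  -- F is nonneg on [T, t]
  have hFnonneg : ∀ s ∈ Icc T t, 0 ≤ F s := by
    intro s hs
    show 0 ≤ ∫ u in T..s, f u
    rw [intervalIntegral.integral_of_le hs.1]
    refine setIntegral_nonneg measurableSet_Ioc ?_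
    intro u hu
    exact le_of_lt (mul_pos (hc_pos u hu.1) (exp_pos _))
  -- F is continuous on [T, t]
  have hFcont : ContinuousOn F (Icc T t) := by
    have h : IntegrableOn f (uIcc T t) := by
      rw [uIcc_of_le ht.le, integrableOn_Icc_iff_integrableOn_Ioc]
      exact hc_int.mono_set Ioc_subset_Ioi_self
    have := intervalIntegral.continuousOn_primitive_interval h
    rwa [uIcc_of_le ht.le] at this
  -- FTC: ∫ F * f = F t ^ 2 / 2
  have hkey : (∫ s in T..t, F s * f s) = F t ^ 2 / 2 := by
    have hFT : F T = 0 := by simp [hFdef]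
    have h2 : ∀ s ∈ Ioo T t, HasDerivWithinAt (fun s => F s ^ 2 / 2) (F s * f s) (Ioi s) s := by
      intro s hs
      have hFd : HasDerivAt F (f s) s := by
        refine intervalIntegral.integral_hasDerivAt_right (hfint s hs.1.le)
          (hfcont.stronglyMeasurableAtFilter isOpen_Ioi s hs.1) ?_
        exact hfcont.continuousAt (isOpen_Ioi.mem_nhds hs.1)
      have h2 := ((hFd.pow 2).div_const 2)
      have : F s * f s = (2 : ℕ) * F s ^ (2 - 1) * f s / 2 := by push_cast; ring
      rw [this]
      exact h2.hasDerivWithinAt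
    have h3 : IntervalIntegrable (fun s => F s * f s) volume T t := by
      refine (hfint t ht.le).continuousOn_mul ?_
      rwa [uIcc_of_le ht.le]
    have := intervalIntegral.integral_eq_sub_of_hasDeriv_right_of_le ht.le
      ((hFcont.pow 2).div_const 2) h2 h3
    rw [this, Pi.pow_apply, Pi.pow_apply, hFT]
    ring
  have hftpos : 0 < f t := mul_pos (hc_pos t ht) (exp_pos _)
  have hFtpos : 0 < F t := by
    refine intervalIntegral.intervalIntegral_pos_of_pos_on (hfint t ht.le) ?_ ht
    intro x hx
    exact mul_pos (hc_pos x hx.1) (exp_pos _)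
  -- monotone comparison
  have hFintint : IntervalIntegrable F volume T t := hFcont.intervalIntegrable_of_Icc ht.le
  have hmono : (∫ s in T..t, f t * F s) ≤ ∫ s in T..t, F s * f s := by
    refine intervalIntegral.integral_mono_on ht.le (hFintint.const_mul _) ?_ ?_
    · refine (hfint t ht.le).continuousOn_mul ?_
      rwa [uIcc_of_le ht.le]
    · intro s hs
      rcases eq_or_lt_of_le hs.1 with h | h
      · simp [hFdef, ← h]
      · have hfle : f t ≤ f s := hc_dec s h t ht hs.2
        calc f t * F s ≤ f s * F s := mul_le_mul_of_nonneg_right hfle (hFnonneg s hs)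
          _ = F s * f s := mul_comm _ _
  have hconst : (∫ s in T..t, f t * F s) = f t * ∫ s in T..t, F s := by
    exact intervalIntegral.integral_const_mul _ _
  calc f t * (∫ s in T..t, F s) = ∫ s in T..t, f t * F s := hconst.symm
    _ ≤ F t ^ 2 / 2 := by rw [← hkey]; exact hmono
    _ < F t ^ 2 := by nlinarith
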